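/- Let g be a nonzero finite-dimensional real solvable Lie algebra equipped with a nondegenerate symmetric bilinear form B satisfying B(⁅x,y⁆,z) = B(x,⁅y,z⁆) for all x,y,z ∈ g. Then the center of g is nonzero. -/

import Mathlib

/-- A nonzero finite-dimensional real solvable Lie algebra carrying a
nondegenerate, symmetric, ad-invariant bilinear form has nonzero center. -/
theorem center_ne_bot_of_solvable_metric
    (L : Type*) [LieRing L] [LieAlgebra ℝ L] [FiniteDimensional ℝ L] [Nontrivial L]
    [LieAlgebra.IsSolvable L]
    (B : LinearMap.BilinForm ℝ L)
    (hBnd : B.Nondegenerate)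
    (hBsymm : ∀ x y : L, B x y = B y x)
    (hBad : ∀ x y z : L, B ⁅x, y⁆ z = B x ⁅y, z⁆) :
    LieAlgebra.center ℝ L ≠ ⊥ := by
  intro hcenter
  set D := LieAlgebra.derivedSeries ℝ L 1 with hD
  have hDlt : D < ⊤ := LieAlgebra.derivedSeries_lt_top_of_solvable ℝ L
  have hrefl : B.IsRefl := fun x y h => by rw [hBsymm]; exact h
  have hle : B.orthogonal (D : Submodule ℝ L) ≤ (LieAlgebra.center ℝ L : Submodule ℝ L) := by
    intro x hx
    rw [LinearMap.BilinForm.mem_orthogonal_iff] at hx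
    refine LieModule.mem_maxTrivSubmodule ℝ L L x |>.2 fun y => ?_
    apply hBnd.1
    intro z
    have hmem : ⁅z, y⁆ ∈ D := by
      rw [hD]
      show _ ∈ LieAlgebra.derivedSeriesOfIdeal ℝ L 1 ⊤
      rw [LieAlgebra.derivedSeriesOfIdeal_succ, LieAlgebra.derivedSeriesOfIdeal_zero]
      exact LieSubmodule.lie_mem_lie (LieSubmodule.mem_top _) (LieSubmodule.mem_top _)
    calc B ⁅y, x⁆ z = B z ⁅y, x⁆ := hBsymm _ _
      _ = B ⁅z, y⁆ x := (hBad z y x).symm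
      _ = B x ⁅z, y⁆ := hBsymm _ _
      _ = 0 := by rw [hBsymm]; exact hx _ hmem
  have hbot : B.orthogonal (D : Submodule ℝ L) = ⊥ := by
    rw [le_bot_iff.mp (hle.trans_eq (by rw [hcenter]; rfl))]
  have hfin := LinearMap.BilinForm.finrank_orthogonal hBnd (D : Submodule ℝ L)
  rw [hbot, finrank_bot] at hfin
  have hle' : Module.finrank ℝ (D : Submodule ℝ L) ≤ Module.finrank ℝ L :=
    Submodule.finrank_le _
  have htop : (D : Submodule ℝ L) = ⊤ := Submodule.eq_top_of_finrank_eq (by omega)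
  refine hDlt.ne ?_
  rw [eq_top_iff]
  intro x _
  have hx : x ∈ (LieIdeal.toLieSubalgebra ℝ L D).toSubmodule := htop ▸ Submodule.mem_top
  exact hx
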